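/- arXiv:1601.05618 — 2 statements merged into one kernel-verified Lean document; each statement's English description precedes it below -/
import Mathlib

section
/- Let μ be a CM probability measure on ℤ with representing measure ν. Then ν satisfies the condition (∃L>0, ∀x∈[0,1): ∫₀ˣ t/(1−t)² ν(dt) ≤ (L/(1−x)) ∫ₓ¹ t/(1−t) ν(dt)) if and only if there exists D > 0 such that Σ_{k=1}^{n} k μ(k) ≤ D n Σ_{k≥n} μ(k) for all n ≥ 1. -/
open MeasureTheory Set Finset
open scoped ENNReal NNReal

/-- Key algebraic identity for `∑ k t^k`. -/
lemma Sn_identity (t : ℝ) (n : ℕ) :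
    (∑ k ∈ Finset.Icc 1 n, (k : ℝ) * t ^ k) * (1 - t) ^ 2
      = t * (1 - (n + 1) * t ^ n + n * t ^ (n + 1)) := by
  induction n with
  | zero => simp
  | succ m ih =>
    rw [Finset.sum_Icc_succ_top (by omega : 1 ≤ m + 1), add_mul, ih]
    push_cast
    ring

lemma geom_identity (t : ℝ) (n : ℕ) :
    (∑ k ∈ Finset.Icc 1 n, t ^ k) * (1 - t) = t - t ^ (n + 1) := by
  induction n with
  | zero => simp
  | succ m ih =>
    rw [Finset.sum_Icc_succ_top (by omega : 1 ≤ m + 1), add_mul, ih]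
    ring

/-- (a): partial sum bounded by full geometric-derivative sum. -/
lemma Sn_le (t : ℝ) (ht0 : 0 ≤ t) (ht1 : t < 1) (n : ℕ) :
    (∑ k ∈ Finset.Icc 1 n, (k : ℝ) * t ^ k) ≤ t / (1 - t) ^ 2 := by
  have h1 : (0:ℝ) < (1 - t) ^ 2 := pow_pos (by linarith) 2
  rw [le_div_iff₀ h1, Sn_identity t n]
  have h2 : t ^ (n + 1) ≤ t ^ n :=
    pow_le_pow_of_le_one ht0 ht1.le (by omega)
  have h3 : (0:ℝ) ≤ t ^ n := pow_nonneg ht0 n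
  nlinarith [mul_le_mul_of_nonneg_left h2 (Nat.cast_nonneg (α := ℝ) n)]

/-- (b): partial sum bounded by `n * t/(1-t)`. -/
lemma Sn_le' (t : ℝ) (ht0 : 0 ≤ t) (ht1 : t < 1) (n : ℕ) :
    (∑ k ∈ Finset.Icc 1 n, (k : ℝ) * t ^ k) ≤ n * (t / (1 - t)) := by
  have h1 : (0:ℝ) < 1 - t := by linarith
  have step : (∑ k ∈ Finset.Icc 1 n, (k : ℝ) * t ^ k)
      ≤ n * ∑ k ∈ Finset.Icc 1 n, t ^ k := by
    rw [Finset.mul_sum]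
    refine Finset.sum_le_sum fun k hk => ?_
    have hk' : (k : ℝ) ≤ n := by
      exact_mod_cast (Finset.mem_Icc.mp hk).2
    exact mul_le_mul_of_nonneg_right hk' (pow_nonneg ht0 k)
  refine step.trans ?_
  have h2 : (∑ k ∈ Finset.Icc 1 n, t ^ k) ≤ t / (1 - t) := by
    rw [le_div_iff₀ h1, geom_identity]
    have : (0:ℝ) ≤ t ^ (n + 1) := pow_nonneg ht0 _
    linarith
  exact mul_le_mul_of_nonneg_left h2 (Nat.cast_nonneg n)

/-- `t^n ≤ e^{-n(1-t)}` for `0 ≤ t`. -/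
lemma pow_le_exp (t : ℝ) (ht0 : 0 ≤ t) (n : ℕ) :
    t ^ n ≤ Real.exp (-(n * (1 - t))) := by
  have h : t ≤ Real.exp (-(1 - t)) := by
    have := Real.add_one_le_exp (t - 1)
    have h2 : t - 1 = -(1-t) := by ring
    linarith [Real.add_one_le_exp (-(1-t))]
  calc t ^ n ≤ (Real.exp (-(1 - t))) ^ n :=
        pow_le_pow_left₀ ht0 h n
    _ = Real.exp (-(n * (1 - t))) := by
        rw [← Real.exp_nat_mul]; ring_nf

/-- `(u+1) e^{-u} ≤ 2/e` for `u ≥ 1`. -/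
lemma aux_ue (u : ℝ) (hu : 1 ≤ u) :
    (u + 1) * Real.exp (-u) ≤ 2 * Real.exp (-1) := by
  have h1 : u + 1 ≤ 2 * Real.exp (u - 1) := by
    have := Real.add_one_le_exp (u - 1)
    nlinarith
  have h2 : (0:ℝ) < Real.exp (-u) := Real.exp_pos _
  calc (u + 1) * Real.exp (-u) ≤ (2 * Real.exp (u - 1)) * Real.exp (-u) :=
        mul_le_mul_of_nonneg_right h1 h2.le
    _ = 2 * Real.exp (-1) := by rw [mul_assoc, ← Real.exp_add]; ring_nf

/-- (c): lower bound for the partial sum when `t ≤ 1 - 1/n`. -/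
lemma Sn_ge (t : ℝ) (ht0 : 0 ≤ t) (n : ℕ) (hn : 1 ≤ n) (ht : n * (1 - t) ≥ 1)
    (ht1 : t < 1) :
    (1 - 2 * Real.exp (-1)) * (t / (1 - t) ^ 2)
      ≤ ∑ k ∈ Finset.Icc 1 n, (k : ℝ) * t ^ k := by
  have h1 : (0:ℝ) < (1 - t) ^ 2 := pow_pos (by linarith) 2
  rw [mul_div_assoc', div_le_iff₀ h1, Sn_identity t n]
  have hu : (1:ℝ) ≤ n * (1 - t) := ht
  have key : t ^ n * (n * (1 - t) + 1) ≤ 2 * Real.exp (-1) := by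
    have h2 : t ^ n ≤ Real.exp (-(n * (1 - t))) := pow_le_exp t ht0 n
    have h3 : (n * (1 - t) + 1) * Real.exp (-(n * (1 - t))) ≤ 2 * Real.exp (-1) :=
      aux_ue _ hu
    have h4 : (0:ℝ) ≤ n * (1 - t) + 1 := by linarith
    nlinarith
  have key2 : 0 ≤ t * (2 * Real.exp (-1) - t ^ n * (n * (1 - t) + 1)) :=
    mul_nonneg ht0 (by linarith)
  nlinarith [pow_succ t n]

/-- `u e^{-u}` is decreasing past 1. -/
lemma aux_mono (M u : ℝ) (hM : 1 ≤ M) (h : M ≤ u) :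
    u * Real.exp (-u) ≤ M * Real.exp (-M) := by
  have h1 : u ≤ M * Real.exp (u - M) := by
    nlinarith [Real.add_one_le_exp (u - M)]
  calc u * Real.exp (-u) ≤ (M * Real.exp (u - M)) * Real.exp (-u) :=
        mul_le_mul_of_nonneg_right h1 (Real.exp_pos _).le
    _ = M * Real.exp (-M) := by rw [mul_assoc, ← Real.exp_add]; ring_nf

/-- (d): absorption estimate. -/
lemma absorb_pt (t x : ℝ) (ht0 : 0 ≤ t) (htx : t ≤ x) (hx : x < 1)
    (n : ℕ) (hn : 2 ≤ n) (M : ℝ) (hM : 1 ≤ M)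
    (hnM : M ≤ ((n : ℝ) - 1) * (1 - x)) :
    (n : ℝ) * (t ^ n * (1 - t)⁻¹)
      ≤ (2 * M * Real.exp (-M)) * (t / (1 - t) ^ 2) := by
  have h1t : (0:ℝ) < 1 - t := by linarith
  set u : ℝ := ((n : ℝ) - 1) * (1 - t) with hu_def
  have hu : M ≤ u := by
    have hn1 : (1:ℝ) ≤ (n:ℝ) - 1 := by
      have : (2:ℝ) ≤ (n:ℝ) := by exact_mod_cast hn
      linarith
    have : ((n:ℝ) - 1) * (1 - x) ≤ u := by
      apply mul_le_mul_of_nonneg_left (by linarith) (by linarith)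
    linarith
  have h2 : t ^ (n - 1) ≤ Real.exp (-u) := by
    have := pow_le_exp t ht0 (n - 1)
    have hc : ((n - 1 : ℕ) : ℝ) = (n : ℝ) - 1 := by
      have : (1:ℕ) ≤ n := by omega
      push_cast [Nat.cast_sub this]
      ring
    rwa [hc] at this
  have h3 : u * Real.exp (-u) ≤ M * Real.exp (-M) := aux_mono M u hM hu
  have h4 : (n : ℝ) * (1 - t) ≤ 2 * u := by
    have : (n:ℝ) ≤ 2 * ((n:ℝ) - 1) := by
      have : (2:ℝ) ≤ (n:ℝ) := by exact_mod_cast hn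
      linarith
    nlinarith
  have h5 : (n : ℝ) * t ^ (n-1) * (1 - t) ≤ 2 * M * Real.exp (-M) := by
    have hnn : (0:ℝ) ≤ (n:ℝ) * (1 - t) := by positivity
    have htn : (0:ℝ) ≤ t ^ (n-1) := pow_nonneg ht0 _
    calc (n : ℝ) * t ^ (n-1) * (1 - t) = ((n:ℝ) * (1 - t)) * t ^ (n-1) := by ring
      _ ≤ (2 * u) * Real.exp (-u) := by
          apply mul_le_mul h4 h2 htn
          linarith
      _ = 2 * (u * Real.exp (-u)) := by ring
      _ ≤ 2 * (M * Real.exp (-M)) := by linarith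
      _ = 2 * M * Real.exp (-M) := by ring
  have key : (n : ℝ) * t ^ n * (1 - t) ≤ (2 * M * Real.exp (-M)) * t := by
    have hp : t ^ n = t * t ^ (n - 1) := by
      rw [← pow_succ']
      congr 1
      omega
    rw [hp]
    nlinarith [mul_le_mul_of_nonneg_left h5 ht0]
  calc (n : ℝ) * (t ^ n * (1 - t)⁻¹)
      = ((n : ℝ) * t ^ n * (1 - t)) / (1 - t) ^ 2 := by
        field_simp
    _ ≤ ((2 * M * Real.exp (-M)) * t) / (1 - t) ^ 2 := by gcongr
    _ = (2 * M * Real.exp (-M)) * (t / (1 - t) ^ 2) := by ring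

/-- Forward tail pointwise bound. -/
lemma tail_pt (t : ℝ) (n : ℕ) (hn : 2 ≤ n) (ht : 1 - 1 / (n:ℝ) ≤ t) (ht1 : t ≤ 1) :
    t * (1 - t)⁻¹ ≤ 3 * (t ^ n * (1 - t)⁻¹) := by
  rcases eq_or_lt_of_le ht1 with h | h
  · rw [h]; simp
  have h1t : (0:ℝ) < 1 - t := by linarith
  have hn2 : (2:ℝ) ≤ (n:ℝ) := by exact_mod_cast hn
  have hn1 : (0:ℝ) < (n:ℝ) - 1 := by linarith
  have hn0 : (0:ℝ) < (n:ℝ) := by linarith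
  have ht0 : (0:ℝ) < t := by
    have : 1 / (n:ℝ) ≤ 1/2 := by
      apply one_div_le_one_div_of_le <;> linarith
    linarith
  have hstep : Real.exp (-(1 / ((n:ℝ) - 1))) ≤ t := by
    have he := Real.add_one_le_exp (1 / ((n:ℝ) - 1))
    have hpos : (0:ℝ) < 1 / ((n:ℝ) - 1) + 1 := by positivity
    have h2 : Real.exp (-(1 / ((n:ℝ) - 1))) ≤ (1 / ((n:ℝ) - 1) + 1)⁻¹ := by
      rw [Real.exp_neg]
      exact inv_anti₀ hpos he
    have h3 : (1 / ((n:ℝ) - 1) + 1)⁻¹ = 1 - 1 / (n:ℝ) := by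
      field_simp
      ring
    linarith [h2, h3 ▸ h2]
  have hpow : Real.exp (-1) ≤ t ^ (n - 1) := by
    have := pow_le_pow_left₀ (Real.exp_pos _).le hstep (n - 1)
    have hc : Real.exp (-(1 / ((n:ℝ) - 1))) ^ (n - 1) = Real.exp (-1) := by
      rw [← Real.exp_nat_mul]
      congr 1
      have hc2 : ((n - 1 : ℕ) : ℝ) = (n : ℝ) - 1 := by
        have : (1:ℕ) ≤ n := by omega
        push_cast [Nat.cast_sub this]; ring
      rw [hc2]
      field_simp
    rwa [hc] at this
  have hexp3 : (1:ℝ)/3 ≤ Real.exp (-1) := by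
    rw [Real.exp_neg, one_div]
    apply inv_anti₀ (Real.exp_pos 1)
    calc Real.exp 1 ≤ 2.7182818286 := (Real.exp_one_lt_d9).le
      _ ≤ 3 := by norm_num
  have key : t ≤ 3 * t ^ n := by
    have h13 : (1:ℝ) ≤ 3 * t ^ (n-1) := by linarith
    have hp : t ^ n = t ^ (n-1) * t := by
      rw [← pow_succ]
      congr 1
      omega
    nlinarith
  calc t * (1 - t)⁻¹ ≤ (3 * t ^ n) * (1 - t)⁻¹ := by
        apply mul_le_mul_of_nonneg_right key (by positivity)
    _ = 3 * (t ^ n * (1 - t)⁻¹) := by ring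

variable {ν : Measure ℝ}

lemma ae_Ico (hone : ν {1} = 0) :
    ∀ᵐ t ∂(ν.restrict (Icc (0:ℝ) 1)), t ∈ Ico (0:ℝ) 1 := by
  have h1 : ∀ᵐ t ∂(ν.restrict (Icc (0:ℝ) 1)), t ∈ Icc (0:ℝ) 1 :=
    ae_restrict_mem measurableSet_Icc
  have h2 : ∀ᵐ t ∂(ν.restrict (Icc (0:ℝ) 1)), t ≠ 1 := by
    refine ae_restrict_of_ae ?_
    rw [ae_iff]
    convert hone using 2
    ext t
    simp
  filter_upwards [h1, h2] with t ht hne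
  exact ⟨ht.1, lt_of_le_of_ne ht.2 hne⟩

lemma tsum_mu [IsFiniteMeasure ν] (hone : ν {1} = 0)
    (hint : IntegrableOn (fun t : ℝ => (1 - t)⁻¹) (Icc 0 1) ν) (n : ℕ) :
    ∑' j : ℕ, ∫ t in Icc (0:ℝ) 1, t ^ (n + j) ∂ν
      = ∫ t in Icc (0:ℝ) 1, t ^ n * (1 - t)⁻¹ ∂ν := by
  have hae := ae_Ico hone
  have hmeas : ∀ j : ℕ, AEStronglyMeasurable (fun t : ℝ => t ^ (n + j))
      (ν.restrict (Icc (0:ℝ) 1)) :=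
    fun j => (measurable_id.pow_const _).aestronglyMeasurable
  have hbound : ∑' j : ℕ, ∫⁻ t, ‖(fun t : ℝ => t ^ (n + j)) t‖₊
      ∂(ν.restrict (Icc (0:ℝ) 1)) ≠ ⊤ := by
    show ∑' j : ℕ, ∫⁻ t, ‖(fun t : ℝ => t ^ (n + j)) t‖ₑ ∂(ν.restrict (Icc (0:ℝ) 1)) ≠ ⊤
    rw [← lintegral_tsum (fun j => (hmeas j).enorm)]
    have hfin : ∫⁻ t, ‖(1 - t)⁻¹‖₊ ∂(ν.restrict (Icc (0:ℝ) 1)) < ⊤ :=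
      hint.hasFiniteIntegral
    refine ne_top_of_le_ne_top hfin.ne (lintegral_mono_ae ?_)
    filter_upwards [ae_Ico hone] with t ht
    have ht0 : (0:ℝ) ≤ t := ht.1
    have ht1 : t < 1 := ht.2
    have hsum : Summable (fun j : ℕ => t ^ (n + j)) := by
      simp only [pow_add]
      exact (summable_geometric_of_lt_one ht0 ht1).mul_left _
    calc ∑' j : ℕ, (‖t ^ (n + j)‖₊ : ℝ≥0∞)
        = ∑' j : ℕ, ENNReal.ofReal (t ^ (n + j)) := by
          congr 1
          ext j
          rw [← Real.enorm_eq_ofReal (pow_nonneg ht0 _)]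
          rfl
      _ = ENNReal.ofReal (∑' j : ℕ, t ^ (n + j)) :=
          (ENNReal.ofReal_tsum_of_nonneg (fun j => pow_nonneg ht0 _) hsum).symm
      _ ≤ ENNReal.ofReal ((1 - t)⁻¹) := by
          apply ENNReal.ofReal_le_ofReal
          have : ∑' j : ℕ, t ^ (n + j) = t ^ n * (1 - t)⁻¹ := by
            calc ∑' j : ℕ, t ^ (n + j) = ∑' j : ℕ, t ^ n * t ^ j := by
                  simp [pow_add]
              _ = t ^ n * ∑' j : ℕ, t ^ j := by rw [tsum_mul_left]
              _ = t ^ n * (1 - t)⁻¹ := by rw [tsum_geometric_of_lt_one ht0 ht1]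
          rw [this]
          have h1 : t ^ n ≤ 1 := pow_le_one₀ ht0 ht1.le
          have h2 : (0:ℝ) ≤ (1 - t)⁻¹ := inv_nonneg.mpr (by linarith)
          nlinarith
      _ = (‖(1 - t)⁻¹‖₊ : ℝ≥0∞) := by
          rw [← Real.enorm_eq_ofReal (inv_nonneg.mpr (by linarith : (0:ℝ) ≤ 1 - t))]
          rfl
  have hswap := integral_tsum hmeas hbound
  rw [← hswap]
  refine integral_congr_ae ?_
  filter_upwards [hae] with t ht
  calc ∑' j : ℕ, t ^ (n + j) = ∑' j : ℕ, t ^ n * t ^ j := by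
        simp [pow_add]
    _ = t ^ n * ∑' j : ℕ, t ^ j := by rw [tsum_mul_left]
    _ = t ^ n * (1 - t)⁻¹ := by rw [tsum_geometric_of_lt_one ht.1 ht.2]

lemma int_pow_frac [IsFiniteMeasure ν]
    (hint : IntegrableOn (fun t : ℝ => (1 - t)⁻¹) (Icc 0 1) ν) (n : ℕ) :
    IntegrableOn (fun t : ℝ => t ^ n * (1 - t)⁻¹) (Icc (0:ℝ) 1) ν := by
  refine Integrable.mono hint ((measurable_id.pow_const n).mul
    ((measurable_const.sub measurable_id).inv)).aestronglyMeasurable ?_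
  filter_upwards [ae_restrict_mem measurableSet_Icc] with t ht
  have ht0 : (0:ℝ) ≤ t := ht.1
  have ht1 : t ≤ 1 := ht.2
  have h1 : (0:ℝ) ≤ (1 - t)⁻¹ := inv_nonneg.mpr (by linarith)
  have h2 : t ^ n ≤ 1 := pow_le_one₀ ht0 ht1
  have h3 : (0:ℝ) ≤ t ^ n := pow_nonneg ht0 n
  rw [Real.norm_eq_abs, Real.norm_eq_abs, abs_of_nonneg (mul_nonneg h3 h1),
    abs_of_nonneg h1]
  nlinarith

lemma int_Sn [IsFiniteMeasure ν] (n : ℕ) (k : ℕ) :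
    IntegrableOn (fun t : ℝ => (k:ℝ) * t ^ k) (Icc (0:ℝ) 1) ν :=
  (continuous_const.mul (continuous_pow k)).continuousOn.integrableOn_compact
    isCompact_Icc

lemma sum_mu_eq [IsFiniteMeasure ν] (n : ℕ) :
    ∑ k ∈ Finset.Icc 1 n, (k : ℝ) * (∫ t in Icc (0:ℝ) 1, t ^ k ∂ν)
      = ∫ t in Icc (0:ℝ) 1, (∑ k ∈ Finset.Icc 1 n, (k:ℝ) * t ^ k) ∂ν := by
  rw [integral_finset_sum _ (fun k _ => int_Sn n k)]
  refine Finset.sum_congr rfl fun k _ => ?_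
  rw [← integral_const_mul]

lemma split_int (f : ℝ → ℝ) (x : ℝ) (hx0 : (0:ℝ) ≤ x) (hx1 : x ≤ 1)
    (hf : IntegrableOn f (Icc (0:ℝ) 1) ν) :
    ∫ t in Icc (0:ℝ) 1, f t ∂ν
      = (∫ t in Icc (0:ℝ) x, f t ∂ν) + ∫ t in Ioc x 1, f t ∂ν := by
  have hdisj : Disjoint (Icc (0:ℝ) x) (Ioc x 1) :=
    (Set.Iic_disjoint_Ioc le_rfl).mono Set.Icc_subset_Iic_self le_rfl
  rw [← Set.Icc_union_Ioc_eq_Icc hx0 hx1]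
  exact setIntegral_union hdisj measurableSet_Ioc
    (hf.mono_set (by rw [← Set.Icc_union_Ioc_eq_Icc hx0 hx1]; exact subset_union_left))
    (hf.mono_set (by rw [← Set.Icc_union_Ioc_eq_Icc hx0 hx1]; exact subset_union_right))

lemma Ioc_ae_Ioo (hone : ν {1} = 0) (x : ℝ) :
    (Ioc x 1 : Set ℝ) =ᵐ[ν] Ioo x 1 := by
  rw [MeasureTheory.ae_eq_set]
  constructor
  · refine measure_mono_null ?_ hone
    rintro t ⟨⟨h1, h2⟩, h3⟩
    have ht1 : t = 1 := by
      by_contra hne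
      exact h3 ⟨h1, lt_of_le_of_ne h2 hne⟩
    simp [ht1]
  · refine measure_mono_null ?_ hone
    rintro t ⟨⟨h1, h2⟩, h3⟩
    exact absurd ⟨h1, h2.le⟩ h3

lemma Sn_cont (n : ℕ) : Continuous (fun t : ℝ => ∑ k ∈ Finset.Icc 1 n, (k:ℝ) * t ^ k) :=
  continuous_finset_sum _ fun k _ => continuous_const.mul (continuous_pow k)

set_option maxHeartbeats 1000000 in
/-- For a CM probability measure `μ(n) = ∫₀¹ tⁿ ν(dt)`, the integral condition
on `ν` is equivalent to the coefficient condition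
`Σ_{k=1}^n k μ(k) ≤ D n Σ_{k≥n} μ(k)`. -/
theorem cm_bar_integral_iff_coeff (ν : Measure ℝ) [IsFiniteMeasure ν]
    (hsupp : ν (Icc (0 : ℝ) 1)ᶜ = 0) (hone : ν {1} = 0)
    (hint : IntegrableOn (fun t : ℝ => (1 - t)⁻¹) (Icc 0 1) ν)
    (hprob : ∫ t in Icc (0 : ℝ) 1, (1 - t)⁻¹ ∂ν = 1) :
    (∃ L : ℝ, 0 < L ∧ ∀ x ∈ Ico (0 : ℝ) 1,
        ∫ t in Icc (0 : ℝ) x, t / (1 - t) ^ 2 ∂ν ≤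
          (L / (1 - x)) * ∫ t in Icc x 1, t / (1 - t) ∂ν) ↔
      (∃ D : ℝ, 0 < D ∧ ∀ n : ℕ, 1 ≤ n →
        ∑ k ∈ Finset.Icc 1 n, (k : ℝ) * (∫ t in Icc (0 : ℝ) 1, t ^ k ∂ν) ≤
          D * n * ∑' j : ℕ, ∫ t in Icc (0 : ℝ) 1, t ^ (n + j) ∂ν) := by
  constructor
  · rintro ⟨L, hL, hcond⟩
    refine ⟨3 * (L + 1), by positivity, fun n hn => ?_⟩
    rw [tsum_mu hone hint n, sum_mu_eq]
    set T := ∫ t in Icc (0:ℝ) 1, t ^ n * (1 - t)⁻¹ ∂ν with hT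
    have hTnn : 0 ≤ T := by
      apply setIntegral_nonneg measurableSet_Icc
      intro t ht
      exact mul_nonneg (pow_nonneg ht.1 n) (inv_nonneg.mpr (by linarith [ht.2]))
    rcases eq_or_lt_of_le hn with h1 | hn2
    · -- n = 1
      have hn1 : n = 1 := h1.symm
      subst hn1
      have e1 : ∫ t in Icc (0:ℝ) 1, (∑ k ∈ Finset.Icc (1:ℕ) 1, (k:ℝ) * t ^ k) ∂ν
          = ∫ t in Icc (0:ℝ) 1, t ∂ν := by
        refine integral_congr_ae (Filter.Eventually.of_forall fun t => ?_)
        simp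
      have e2 : ∫ t in Icc (0:ℝ) 1, t ∂ν ≤ T := by
        rw [hT]
        refine integral_mono_ae
          (continuous_id.continuousOn.integrableOn_compact isCompact_Icc)
          (int_pow_frac hint 1) ?_
        filter_upwards [ae_Ico hone] with t ht
        have h1t : (0:ℝ) < 1 - t := by linarith [ht.2]
        have key : t ^ 1 * (1 - t)⁻¹ - t = t * t * (1 - t)⁻¹ := by
          field_simp
          ring
        nlinarith [mul_nonneg (mul_nonneg ht.1 ht.1) (inv_nonneg.mpr h1t.le)]
      rw [e1]
      push_cast
      nlinarith
    · have hn2' : 2 ≤ n := hn2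
      have hnR : (2:ℝ) ≤ (n:ℝ) := by exact_mod_cast hn2'
      have hnpos : (0:ℝ) < (n:ℝ) := by linarith
      set x : ℝ := 1 - 1 / n with hxdef
      have hx0 : (0:ℝ) ≤ x := by
        have : 1 / (n:ℝ) ≤ 1 := by
          rw [div_le_one hnpos]; linarith
        rw [hxdef]; linarith
      have hx1 : x < 1 := by
        have : 0 < 1 / (n:ℝ) := by positivity
        rw [hxdef]; linarith
      have hIoo : (Ioo x 1 : Set ℝ) ⊆ Icc 0 1 :=
        fun t ht => ⟨le_trans hx0 ht.1.le, ht.2.le⟩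
      have hIcc : (Icc x 1 : Set ℝ) ⊆ Icc 0 1 :=
        fun t ht => ⟨le_trans hx0 ht.1, ht.2⟩
      have hIcc0x : (Icc 0 x : Set ℝ) ⊆ Icc 0 1 :=
        fun t ht => ⟨ht.1, le_trans ht.2 hx1.le⟩
      have hSint : IntegrableOn (fun t : ℝ => ∑ k ∈ Finset.Icc 1 n, (k:ℝ) * t ^ k)
          (Icc (0:ℝ) 1) ν :=
        (Sn_cont n).continuousOn.integrableOn_compact isCompact_Icc
      have hfr : IntegrableOn (fun t : ℝ => t / (1 - t)) (Icc (0:ℝ) 1) ν := by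
        have := int_pow_frac hint 1
        simp only [pow_one] at this
        simpa only [div_eq_mul_inv] using this
      rw [split_int _ x hx0 hx1.le hSint]
      set B := ∫ t in Icc x 1, t / (1 - t) ∂ν with hBdef
      have hB0 : (0:ℝ) ≤ B :=
        setIntegral_nonneg measurableSet_Icc
          (fun t ht => div_nonneg (le_trans hx0 ht.1) (by linarith [ht.2]))
      have h1 : ∫ t in Icc (0:ℝ) x, (∑ k ∈ Finset.Icc 1 n, (k:ℝ) * t ^ k) ∂ν
          ≤ (L / (1 - x)) * B := by
        refine le_trans ?_ (hcond x ⟨hx0, hx1⟩)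
        refine setIntegral_mono_on (hSint.mono_set hIcc0x) ?_ measurableSet_Icc ?_
        · refine ContinuousOn.integrableOn_compact isCompact_Icc ?_
          refine ContinuousOn.div continuousOn_id
            ((continuous_const.sub continuous_id).pow 2).continuousOn ?_
          intro t ht
          have : t ≤ x := ht.2
          have h1t : (0:ℝ) < 1 - t := by linarith
          positivity
        · intro t ht
          exact Sn_le t ht.1 (lt_of_le_of_lt ht.2 hx1) n
      have hLx : L / (1 - x) = L * n := by
        have hx : (1:ℝ) - x = 1 / n := by rw [hxdef]; ring
        rw [hx]
        field_simp
      have hfrx : IntegrableOn (fun t : ℝ => t / (1 - t)) (Icc x 1) ν :=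
        hfr.mono_set hIcc
      have hfrae : 0 ≤ᵐ[ν.restrict (Icc x 1)] fun t : ℝ => t / (1 - t) := by
        filter_upwards [ae_restrict_mem measurableSet_Icc] with t ht
        exact div_nonneg (le_trans hx0 ht.1) (by linarith [ht.2])
      have h2 : ∫ t in Ioc x 1, (∑ k ∈ Finset.Icc 1 n, (k:ℝ) * t ^ k) ∂ν
          ≤ (n:ℝ) * B := by
        rw [setIntegral_congr_set (Ioc_ae_Ioo hone x)]
        have hgint : IntegrableOn (fun t : ℝ => (n:ℝ) * (t / (1 - t))) (Ioo x 1) ν :=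
          (hfr.mono_set hIoo).const_mul _
        have step1 : ∫ t in Ioo x 1, (∑ k ∈ Finset.Icc 1 n, (k:ℝ) * t ^ k) ∂ν
            ≤ ∫ t in Ioo x 1, (n:ℝ) * (t / (1 - t)) ∂ν := by
          refine setIntegral_mono_on
            (hSint.mono_set (Set.Ioo_subset_Icc_self.trans hIcc)) hgint
            measurableSet_Ioo ?_
          intro t ht
          exact Sn_le' t (le_trans hx0 ht.1.le) ht.2 n
        have step2 : ∫ t in Ioo x 1, (n:ℝ) * (t / (1 - t)) ∂ν
            = (n:ℝ) * ∫ t in Ioo x 1, t / (1 - t) ∂ν := integral_const_mul _ _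
        have step3 : ∫ t in Ioo x 1, t / (1 - t) ∂ν ≤ B := by
          rw [hBdef]
          exact setIntegral_mono_set hfrx hfrae Set.Ioo_subset_Icc_self.eventuallyLE
        calc ∫ t in Ioo x 1, (∑ k ∈ Finset.Icc 1 n, (k:ℝ) * t ^ k) ∂ν
            ≤ ∫ t in Ioo x 1, (n:ℝ) * (t / (1 - t)) ∂ν := step1
          _ = (n:ℝ) * ∫ t in Ioo x 1, t / (1 - t) ∂ν := step2
          _ ≤ (n:ℝ) * B := mul_le_mul_of_nonneg_left step3 (by positivity)
      have h3 : B ≤ 3 * T := by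
        have s1 : B ≤ ∫ t in Icc x 1, 3 * (t ^ n * (1 - t)⁻¹) ∂ν := by
          rw [hBdef]
          refine setIntegral_mono_on hfrx
            (((int_pow_frac hint n).mono_set hIcc).const_mul 3)
            measurableSet_Icc ?_
          intro t ht
          have ht1 : 1 - 1 / (n:ℝ) ≤ t := by rw [← hxdef]; exact ht.1
          have := tail_pt t n hn2' ht1 ht.2
          rw [div_eq_mul_inv]
          exact this
        have s2 : ∫ t in Icc x 1, 3 * (t ^ n * (1 - t)⁻¹) ∂ν
            = 3 * ∫ t in Icc x 1, t ^ n * (1 - t)⁻¹ ∂ν := integral_const_mul _ _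
        have s3 : ∫ t in Icc x 1, t ^ n * (1 - t)⁻¹ ∂ν ≤ T := by
          rw [hT]
          refine setIntegral_mono_set (int_pow_frac hint n) ?_ hIcc.eventuallyLE
          filter_upwards [ae_restrict_mem measurableSet_Icc] with t ht
          exact mul_nonneg (pow_nonneg ht.1 n) (inv_nonneg.mpr (by linarith [ht.2]))
        linarith
      rw [hLx] at h1
      have h4 : (L + 1) * (n:ℝ) * B ≤ (L + 1) * (n:ℝ) * (3 * T) :=
        mul_le_mul_of_nonneg_left h3 (by positivity)
      nlinarith
  · rintro ⟨D, hD, hcond⟩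
    have hE : (0:ℝ) < 1 - 2 * Real.exp (-1) := by
      have h2 : (2:ℝ) < Real.exp 1 := by
        calc (2:ℝ) < 2.7182818283 := by norm_num
          _ < Real.exp 1 := Real.exp_one_gt_d9
      have h1 : Real.exp (-1) < 1/2 := by
        rw [Real.exp_neg]
        have := Real.exp_pos 1
        rw [inv_lt_comm₀ this (by norm_num)]
        norm_num
        linarith
      linarith
    have hEne : (1 - 2 * Real.exp (-1)) ≠ 0 := ne_of_gt hE
    set C : ℝ := (1 - 2 * Real.exp (-1))⁻¹ with hCdef
    have hC : 0 < C := inv_pos.mpr hE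
    set M : ℝ := max 1 (16 * C * D) with hMdef
    have hM1 : (1:ℝ) ≤ M := le_max_left _ _
    have hM16 : 16 * C * D ≤ M := le_max_right _ _
    have hMpos : (0:ℝ) < M := by linarith
    have hhalf : 2 * C * D * M * Real.exp (-M) ≤ 1 / 2 := by
      have hb : M / 2 + 1 ≤ Real.exp (M / 2) := Real.add_one_le_exp (M / 2)
      have he2 : Real.exp M = Real.exp (M / 2) * Real.exp (M / 2) := by
        rw [← Real.exp_add]; ring_nf
      have h3 : (M/2 + 1) * (M/2 + 1) ≤ Real.exp (M/2) * Real.exp (M/2) :=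
        mul_le_mul hb hb (by linarith) (Real.exp_nonneg _)
      have hexp : M ^ 2 / 4 ≤ Real.exp M := by nlinarith
      have h6 : 4 * C * D * M ≤ Real.exp M := by
        have hCD : 0 < C * D := mul_pos hC hD
        have h7 : 4 * C * D * M ≤ M / 4 * M := by nlinarith
        calc 4 * C * D * M ≤ M / 4 * M := h7
          _ = M ^ 2 / 4 := by ring
          _ ≤ Real.exp M := hexp
      have h4 : Real.exp M * Real.exp (-M) = 1 := by
        rw [← Real.exp_add]; norm_num
      have h5 : (0:ℝ) < Real.exp (-M) := Real.exp_pos _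
      calc 2 * C * D * M * Real.exp (-M)
          ≤ (Real.exp M / 2) * Real.exp (-M) := by
            apply mul_le_mul_of_nonneg_right (by linarith) h5.le
        _ = (Real.exp M * Real.exp (-M)) / 2 := by ring
        _ = 1 / 2 := by rw [h4]
    refine ⟨2 * C * D * (M + 2), by positivity, ?_⟩
    rintro x ⟨hx0, hx1⟩
    have h1x : (0:ℝ) < 1 - x := by linarith
    set n : ℕ := ⌈M / (1 - x)⌉₊ + 1 with hndef
    have hceil : (0:ℝ) < M / (1 - x) := by positivity
    have hn2 : 2 ≤ n := by
      have h := Nat.ceil_pos.mpr hceil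
      omega
    have hnR1 : M / (1 - x) ≤ (n:ℝ) - 1 := by
      have h := Nat.le_ceil (M / (1 - x))
      rw [hndef]
      push_cast
      linarith
    have hn_low : M ≤ ((n:ℝ) - 1) * (1 - x) := by
      have := (div_le_iff₀ h1x).mp hnR1
      linarith
    have hn_upR : (n:ℝ) ≤ M / (1 - x) + 2 := by
      have h := Nat.ceil_lt_add_one hceil.le
      rw [hndef]
      push_cast
      linarith
    have hn_up : (n:ℝ) * (1 - x) ≤ M + 2 := by
      have h := mul_le_mul_of_nonneg_right hn_upR h1x.le
      have h2 : (M / (1 - x) + 2) * (1 - x) = M + 2 * (1 - x) := by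
        field_simp
      nlinarith
    have hnR : (2:ℝ) ≤ (n:ℝ) := by exact_mod_cast hn2
    have hIcc0x : (Icc 0 x : Set ℝ) ⊆ Icc 0 1 :=
      fun t ht => ⟨ht.1, le_trans ht.2 hx1.le⟩
    have hIoc : (Ioc x 1 : Set ℝ) ⊆ Icc 0 1 :=
      fun t ht => ⟨le_trans hx0 ht.1.le, ht.2⟩
    have hIccx1 : (Icc x 1 : Set ℝ) ⊆ Icc 0 1 :=
      fun t ht => ⟨le_trans hx0 ht.1, ht.2⟩
    have hA0 : (0:ℝ) ≤ ∫ t in Icc (0:ℝ) x, t / (1 - t) ^ 2 ∂ν :=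
      setIntegral_nonneg measurableSet_Icc
        (fun t ht => div_nonneg ht.1 (sq_nonneg _))
    have hB0 : (0:ℝ) ≤ ∫ t in Icc x 1, t / (1 - t) ∂ν :=
      setIntegral_nonneg measurableSet_Icc
        (fun t ht => div_nonneg (le_trans hx0 ht.1) (by linarith [ht.2]))
    have hq2int : IntegrableOn (fun t : ℝ => t / (1 - t) ^ 2) (Icc (0:ℝ) x) ν := by
      refine ContinuousOn.integrableOn_compact isCompact_Icc ?_
      refine ContinuousOn.div continuousOn_id
        ((continuous_const.sub continuous_id).pow 2).continuousOn ?_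
      intro t ht
      have h1t : (0:ℝ) < 1 - t := by linarith [ht.2]
      positivity
    have hSint : IntegrableOn (fun t : ℝ => ∑ k ∈ Finset.Icc 1 n, (k:ℝ) * t ^ k)
        (Icc (0:ℝ) 1) ν :=
      (Sn_cont n).continuousOn.integrableOn_compact isCompact_Icc
    have hfr : IntegrableOn (fun t : ℝ => t / (1 - t)) (Icc (0:ℝ) 1) ν := by
      have := int_pow_frac hint 1
      simp only [pow_one] at this
      simpa only [div_eq_mul_inv] using this
    have hfrx : IntegrableOn (fun t : ℝ => t / (1 - t)) (Icc x 1) ν :=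
      hfr.mono_set hIccx1
    have hfrae : 0 ≤ᵐ[ν.restrict (Icc x 1)] fun t : ℝ => t / (1 - t) := by
      filter_upwards [ae_restrict_mem measurableSet_Icc] with t ht
      exact div_nonneg (le_trans hx0 ht.1) (by linarith [ht.2])
    -- Step 1
    have step1 : (∫ t in Icc (0:ℝ) x, t / (1 - t) ^ 2 ∂ν)
        ≤ C * ∫ t in Icc (0:ℝ) 1, (∑ k ∈ Finset.Icc 1 n, (k:ℝ) * t ^ k) ∂ν := by
      have s1 : (∫ t in Icc (0:ℝ) x, t / (1 - t) ^ 2 ∂ν)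
          ≤ C * ∫ t in Icc (0:ℝ) x, (∑ k ∈ Finset.Icc 1 n, (k:ℝ) * t ^ k) ∂ν := by
        rw [← integral_const_mul]
        refine setIntegral_mono_on hq2int
          ((hSint.mono_set hIcc0x).const_mul C) measurableSet_Icc ?_
        intro t ht
        have htx : t ≤ x := ht.2
        have ht1 : t < 1 := lt_of_le_of_lt htx hx1
        have hprod : (1:ℝ) ≤ (n:ℝ) * (1 - t) := by
          have ha : (1:ℝ) - x ≤ 1 - t := by linarith
          have hb : ((n:ℝ) - 1) * (1 - x) ≤ ((n:ℝ) - 1) * (1 - t) :=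
            mul_le_mul_of_nonneg_left ha (by linarith)
          have hc : ((n:ℝ) - 1) * (1 - t) ≤ (n:ℝ) * (1 - t) :=
            mul_le_mul_of_nonneg_right (by linarith) (by linarith)
          linarith
        have hkey := Sn_ge t ht.1 n (by omega) hprod ht1
        calc t / (1 - t) ^ 2
            = C * ((1 - 2 * Real.exp (-1)) * (t / (1 - t) ^ 2)) := by
              rw [hCdef, ← mul_assoc, inv_mul_cancel₀ hEne, one_mul]
          _ ≤ C * (∑ k ∈ Finset.Icc 1 n, (k:ℝ) * t ^ k) :=
              mul_le_mul_of_nonneg_left hkey hC.le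
      have s2 : (∫ t in Icc (0:ℝ) x, (∑ k ∈ Finset.Icc 1 n, (k:ℝ) * t ^ k) ∂ν)
          ≤ ∫ t in Icc (0:ℝ) 1, (∑ k ∈ Finset.Icc 1 n, (k:ℝ) * t ^ k) ∂ν := by
        refine setIntegral_mono_set hSint ?_ hIcc0x.eventuallyLE
        filter_upwards [ae_restrict_mem measurableSet_Icc] with t ht
        exact Finset.sum_nonneg fun k _ =>
          mul_nonneg (Nat.cast_nonneg k) (pow_nonneg ht.1 k)
      calc (∫ t in Icc (0:ℝ) x, t / (1 - t) ^ 2 ∂ν)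
          ≤ C * ∫ t in Icc (0:ℝ) x, (∑ k ∈ Finset.Icc 1 n, (k:ℝ) * t ^ k) ∂ν := s1
        _ ≤ C * ∫ t in Icc (0:ℝ) 1, (∑ k ∈ Finset.Icc 1 n, (k:ℝ) * t ^ k) ∂ν :=
            mul_le_mul_of_nonneg_left s2 hC.le
    -- Step 2
    have step2 : (∫ t in Icc (0:ℝ) 1, (∑ k ∈ Finset.Icc 1 n, (k:ℝ) * t ^ k) ∂ν)
        ≤ D * n * ∫ t in Icc (0:ℝ) 1, t ^ n * (1 - t)⁻¹ ∂ν := by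
      have h := hcond n (by omega)
      rw [tsum_mu hone hint n, sum_mu_eq] at h
      exact h
    -- Step 3
    have step3 : (∫ t in Icc (0:ℝ) 1, t ^ n * (1 - t)⁻¹ ∂ν)
        = (∫ t in Icc (0:ℝ) x, t ^ n * (1 - t)⁻¹ ∂ν)
          + ∫ t in Ioc x 1, t ^ n * (1 - t)⁻¹ ∂ν :=
      split_int _ x hx0 hx1.le (int_pow_frac hint n)
    -- Step 4
    have step4 : (n:ℝ) * (∫ t in Icc (0:ℝ) x, t ^ n * (1 - t)⁻¹ ∂ν)
        ≤ 2 * M * Real.exp (-M) * ∫ t in Icc (0:ℝ) x, t / (1 - t) ^ 2 ∂ν := by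
      rw [← integral_const_mul (n:ℝ), ← integral_const_mul (2 * M * Real.exp (-M))]
      refine setIntegral_mono_on
        (((int_pow_frac hint n).mono_set hIcc0x).const_mul _)
        (hq2int.const_mul _) measurableSet_Icc ?_
      intro t ht
      exact absorb_pt t x ht.1 ht.2 hx1 n hn2 M hM1 hn_low
    -- Step 5
    have step5 : (∫ t in Ioc x 1, t ^ n * (1 - t)⁻¹ ∂ν)
        ≤ ∫ t in Icc x 1, t / (1 - t) ∂ν := by
      have s1 : (∫ t in Ioc x 1, t ^ n * (1 - t)⁻¹ ∂ν)
          ≤ ∫ t in Ioc x 1, t / (1 - t) ∂ν := by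
        refine setIntegral_mono_on ((int_pow_frac hint n).mono_set hIoc)
          (hfr.mono_set hIoc) measurableSet_Ioc ?_
        intro t ht
        have ht0 : (0:ℝ) ≤ t := le_trans hx0 ht.1.le
        have htn : t ^ n ≤ t := by
          calc t ^ n ≤ t ^ 1 := pow_le_pow_of_le_one ht0 ht.2 (by omega)
            _ = t := pow_one t
        rw [div_eq_mul_inv]
        exact mul_le_mul_of_nonneg_right htn (inv_nonneg.mpr (by linarith [ht.2]))
      have s2 : (∫ t in Ioc x 1, t / (1 - t) ∂ν) ≤ ∫ t in Icc x 1, t / (1 - t) ∂ν :=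
        setIntegral_mono_set hfrx hfrae Set.Ioc_subset_Icc_self.eventuallyLE
      linarith
    -- combine
    have hcomb : (∫ t in Icc (0:ℝ) x, t / (1 - t) ^ 2 ∂ν)
        ≤ C * D * (n:ℝ) * (∫ t in Icc (0:ℝ) x, t ^ n * (1 - t)⁻¹ ∂ν)
          + C * D * (n:ℝ) * (∫ t in Ioc x 1, t ^ n * (1 - t)⁻¹ ∂ν) := by
      calc (∫ t in Icc (0:ℝ) x, t / (1 - t) ^ 2 ∂ν)
          ≤ C * ∫ t in Icc (0:ℝ) 1, (∑ k ∈ Finset.Icc 1 n, (k:ℝ) * t ^ k) ∂ν := step1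
        _ ≤ C * (D * n * ∫ t in Icc (0:ℝ) 1, t ^ n * (1 - t)⁻¹ ∂ν) :=
            mul_le_mul_of_nonneg_left step2 hC.le
        _ = C * D * (n:ℝ) * (∫ t in Icc (0:ℝ) x, t ^ n * (1 - t)⁻¹ ∂ν)
            + C * D * (n:ℝ) * (∫ t in Ioc x 1, t ^ n * (1 - t)⁻¹ ∂ν) := by
            rw [step3]; ring
    have habs : C * D * (n:ℝ) * (∫ t in Icc (0:ℝ) x, t ^ n * (1 - t)⁻¹ ∂ν)
        ≤ 1 / 2 * ∫ t in Icc (0:ℝ) x, t / (1 - t) ^ 2 ∂ν := by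
      have h1 : C * D * (n:ℝ) * (∫ t in Icc (0:ℝ) x, t ^ n * (1 - t)⁻¹ ∂ν)
          = C * D * ((n:ℝ) * ∫ t in Icc (0:ℝ) x, t ^ n * (1 - t)⁻¹ ∂ν) := by ring
      rw [h1]
      calc C * D * ((n:ℝ) * ∫ t in Icc (0:ℝ) x, t ^ n * (1 - t)⁻¹ ∂ν)
          ≤ C * D * (2 * M * Real.exp (-M) * ∫ t in Icc (0:ℝ) x, t / (1 - t) ^ 2 ∂ν) :=
            mul_le_mul_of_nonneg_left step4 (by positivity)
        _ = (2 * C * D * M * Real.exp (-M)) * ∫ t in Icc (0:ℝ) x, t / (1 - t) ^ 2 ∂ν := by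
            ring
        _ ≤ 1 / 2 * ∫ t in Icc (0:ℝ) x, t / (1 - t) ^ 2 ∂ν :=
            mul_le_mul_of_nonneg_right hhalf hA0
    have h7 : C * D * (n:ℝ) * (∫ t in Ioc x 1, t ^ n * (1 - t)⁻¹ ∂ν)
        ≤ C * D * (n:ℝ) * ∫ t in Icc x 1, t / (1 - t) ∂ν :=
      mul_le_mul_of_nonneg_left step5 (by positivity)
    have hfin : (∫ t in Icc (0:ℝ) x, t / (1 - t) ^ 2 ∂ν)
        ≤ 2 * C * D * (n:ℝ) * ∫ t in Icc x 1, t / (1 - t) ∂ν := by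
      linarith
    have h8 : (n:ℝ) ≤ (M + 2) / (1 - x) := by
      rw [le_div_iff₀ h1x]
      exact hn_up
    have h9 : 2 * C * D * (n:ℝ) * (∫ t in Icc x 1, t / (1 - t) ∂ν)
        ≤ 2 * C * D * ((M + 2) / (1 - x)) * ∫ t in Icc x 1, t / (1 - t) ∂ν := by
      apply mul_le_mul_of_nonneg_right ?_ hB0
      exact mul_le_mul_of_nonneg_left h8 (by positivity)
    have heq : 2 * C * D * ((M + 2) / (1 - x)) = 2 * C * D * (M + 2) / (1 - x) := by
      ring
    rw [heq] at h9
    linarith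
end

section
/- Define χ(z) = ∫₀¹ ν(dt)/(1−t) − ∫₀¹ ν(dt)/(1−t+tz) for a finite positive measure ν on [0,1] with ∫₀¹ ν(dt)/(1−t) = 1, and assume ν satisfies: ∃L>0, ∀x∈[0,1): ∫₀ˣ t/(1−t)² ν(dt) ≤ (L/(1−x)) ∫ₓ¹ t/(1−t) ν(dt). Then there exists C > 0 such that for every z = a+ib with a ≥ 0 one has |Im χ(z)| ≤ C Re χ(z); i.e. χ maps the closed right half-plane into a sector around the positive real axis. -/
open MeasureTheory Set

section ChiAux

lemma chiAux_Dpos {t a b : ℝ} (ht0 : 0 ≤ t) (ht1 : t < 1) (ha : 0 ≤ a) :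
    0 < (1 - t + t*a)^2 + (t*b)^2 := by
  have h1 : 0 < 1 - t + t*a := by nlinarith
  positivity

lemma chiAux_fRe_eq {t a b : ℝ} (ht0 : 0 ≤ t) (ht1 : t < 1) (ha : 0 ≤ a) :
    (1-t)⁻¹ - (1 - t + t*a)/((1 - t + t*a)^2 + (t*b)^2)
      = (t*a*(1-t) + t^2*(a^2+b^2))/((1-t)*((1 - t + t*a)^2 + (t*b)^2)) := by
  have hD := chiAux_Dpos ht0 ht1 (b := b) ha
  have h1 : 0 < 1 - t := by linarith
  field_simp
  ring

lemma chiAux_N_nonneg {t a b : ℝ} (ht0 : 0 ≤ t) (ht1 : t < 1) (ha : 0 ≤ a) :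
    0 ≤ (t*a*(1-t) + t^2*(a^2+b^2)) :=
  add_nonneg (mul_nonneg (mul_nonneg ht0 ha) (by linarith)) (by positivity)

lemma chiAux_fRe_nonneg {t a b : ℝ} (ht0 : 0 ≤ t) (ht1 : t < 1) (ha : 0 ≤ a) :
    0 ≤ (1-t)⁻¹ - (1 - t + t*a)/((1 - t + t*a)^2 + (t*b)^2) := by
  rw [chiAux_fRe_eq ht0 ht1 ha]
  have hD := chiAux_Dpos ht0 ht1 (b := b) ha
  have h1 : 0 < 1 - t := by linarith
  exact div_nonneg (chiAux_N_nonneg ht0 ht1 ha) (by positivity)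

-- |Im integrand| ≤ (1/2) (1-t)⁻¹
lemma chiAux_L2 {t a b : ℝ} (ht0 : 0 ≤ t) (ht1 : t < 1) (ha : 0 ≤ a) :
    |t*b/((1 - t + t*a)^2 + (t*b)^2)| ≤ (1/2)*(1-t)⁻¹ := by
  have hD := chiAux_Dpos ht0 ht1 (b := b) ha
  have h1 : 0 < 1 - t := by linarith
  rw [abs_div, abs_of_pos hD, div_le_iff₀ hD]
  have hab : |t*b| = t * |b| := by rw [abs_mul, abs_of_nonneg ht0]
  rw [hab]
  have h2 : (t*b)^2 = (t * |b|)^2 := by rw [mul_pow, mul_pow, sq_abs]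
  have key : t * |b| * (2 * (1-t)) ≤ (1 - t + t*a)^2 + (t*b)^2 := by
    nlinarith [sq_nonneg (1 - t - t * |b|), sq_nonneg (t*a),
      mul_nonneg (mul_nonneg ht0 (abs_nonneg b)) (mul_nonneg ht0 ha)]
  calc t * |b| ≤ ((1 - t + t*a)^2 + (t*b)^2) / (2*(1-t)) := by
        rw [le_div_iff₀ (by linarith)]; linarith [key]
    _ = (1/2)*(1-t)⁻¹ * ((1 - t + t*a)^2 + (t*b)^2) := by field_simp

-- Re integrand lower bound when |z| ≥ 1/2
lemma chiAux_L4 {t a b : ℝ} (ht0 : 0 ≤ t) (ht1 : t < 1) (ha : 0 ≤ a)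
    (hz : 1/4 ≤ a^2 + b^2) :
    t^2/16 ≤ (1-t)⁻¹ - (1 - t + t*a)/((1 - t + t*a)^2 + (t*b)^2) := by
  rw [chiAux_fRe_eq ht0 ht1 ha]
  have hD := chiAux_Dpos ht0 ht1 (b := b) ha
  have h1 : (0:ℝ) < 1 - t := by linarith
  rw [le_div_iff₀ (by positivity)]
  have hs0 : (0:ℝ) ≤ a^2 + b^2 := by positivity
  have e1 : (1-t+t*a)^2 + (t*b)^2 ≤ 2*(1-t)^2 + 2*t^2*(a^2+b^2) := by
    nlinarith [sq_nonneg (1-t-t*a), sq_nonneg (t*b)]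
  have c1 : (1-t)*((1 - t + t*a)^2 + (t*b)^2) ≤ 2 + 2*t^2*(a^2+b^2) := by
    nlinarith [mul_le_mul_of_nonneg_left e1 h1.le, sq_nonneg (1-t),
      mul_nonneg (mul_nonneg ht0 (sq_nonneg t)) hs0]
  have ht2 : t^2 ≤ 1 := by nlinarith
  have h4 : t^2*(t^2*(a^2+b^2)) ≤ t^2*(a^2+b^2) := by
    nlinarith [mul_nonneg (sq_nonneg t) hs0]
  have hq : t^2 * (1/4) ≤ t^2*(a^2+b^2) :=
    mul_le_mul_of_nonneg_left hz (sq_nonneg t)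
  nlinarith [mul_le_mul_of_nonneg_left c1 (sq_nonneg t),
    mul_nonneg (mul_nonneg ht0 ha) h1.le]

-- tail: t/(1-t) ≤ 2 * Re integrand  (when 1-t ≤ t|b|)
lemma chiAux_L7 {t a b : ℝ} (ht0 : 0 ≤ t) (ht1 : t < 1) (ha : 0 ≤ a)
    (htb : 1 - t ≤ t * |b|) :
    t/(1-t) ≤ 2*((1-t)⁻¹ - (1 - t + t*a)/((1 - t + t*a)^2 + (t*b)^2)) := by
  rw [chiAux_fRe_eq ht0 ht1 ha]
  have hD := chiAux_Dpos ht0 ht1 (b := b) ha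
  have h1 : (0:ℝ) < 1 - t := by linarith
  have hL5b : t * ((1 - t + t*a)^2 + (t*b)^2) ≤ 2 * (t*a*(1-t) + t^2*(a^2+b^2)) := by
    have h2 : (t * |b|)^2 = t^2*b^2 := by rw [mul_pow, sq_abs]
    have hb2 : (1-t)^2 ≤ t^2*b^2 := by
      have key := mul_self_le_mul_self h1.le htb
      nlinarith [sq_abs b]
    nlinarith [mul_nonneg ht0 (sq_nonneg (t*a)), mul_nonneg ht0 (sq_nonneg (t*b)),
      mul_nonneg (mul_nonneg ht0 ht0) (mul_nonneg ht0 ha),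
      mul_nonneg (mul_nonneg ht0 ha) h1.le, mul_le_mul_of_nonneg_left hb2 ht0,
      mul_nonneg (sub_nonneg.2 ht1.le) (sq_nonneg (t*a)),
      mul_nonneg (sub_nonneg.2 ht1.le) (sq_nonneg (t*b)),
      mul_nonneg (sub_nonneg.2 ht1.le) (mul_nonneg (mul_nonneg ht0 ha) h1.le)]
  rw [mul_div_assoc', div_le_div_iff₀ h1 (by positivity)]
  nlinarith [mul_le_mul_of_nonneg_left hL5b h1.le]

-- tail: |Im integrand| ≤ Re integrand (when 1-t ≤ t|b|)
lemma chiAux_L8 {t a b : ℝ} (ht0 : 0 ≤ t) (ht1 : t < 1) (ha : 0 ≤ a)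
    (htb : 1 - t ≤ t * |b|) :
    |t*b/((1 - t + t*a)^2 + (t*b)^2)|
      ≤ (1-t)⁻¹ - (1 - t + t*a)/((1 - t + t*a)^2 + (t*b)^2) := by
  rw [chiAux_fRe_eq ht0 ht1 ha]
  have hD := chiAux_Dpos ht0 ht1 (b := b) ha
  have h1 : (0:ℝ) < 1 - t := by linarith
  rw [abs_div, abs_of_pos hD, abs_mul, abs_of_nonneg ht0,
    div_le_div_iff₀ hD (by positivity)]
  have hL5a : t * |b| * (1-t) ≤ t*a*(1-t) + t^2*(a^2+b^2) := by
    have h2 : (t * |b|)^2 = t^2*b^2 := by rw [mul_pow, sq_abs]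
    nlinarith [mul_nonneg (mul_nonneg ht0 ha) h1.le, sq_nonneg (t*a),
      mul_nonneg (mul_nonneg ht0 (abs_nonneg b)) h1.le]
  nlinarith [mul_le_mul_of_nonneg_right hL5a hD.le]

-- |Im integrand| ≤ |b| t/(1-t)^2
lemma chiAux_L6 {t a b : ℝ} (ht0 : 0 ≤ t) (ht1 : t < 1) (ha : 0 ≤ a) :
    |t*b/((1 - t + t*a)^2 + (t*b)^2)| ≤ |b| * (t/(1-t)^2) := by
  have hD := chiAux_Dpos ht0 ht1 (b := b) ha
  have h1 : 0 < 1 - t := by linarith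
  rw [abs_div, abs_of_pos hD, div_le_iff₀ hD, abs_mul, abs_of_nonneg ht0]
  have hle : (1-t)^2 ≤ (1 - t + t*a)^2 + (t*b)^2 := by
    nlinarith [sq_nonneg (t*b), mul_nonneg ht0 ha]
  calc t * |b| = |b| * (t / (1-t)^2) * (1-t)^2 := by field_simp
    _ ≤ |b| * (t / (1-t)^2) * ((1 - t + t*a)^2 + (t*b)^2) := by
        apply mul_le_mul_of_nonneg_left hle; positivity

lemma chiAux_inv_re (t : ℝ) (z : ℂ) :
    (((1 : ℂ) - (t : ℂ) + (t : ℂ) * z)⁻¹).re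
      = (1 - t + t*z.re) / ((1 - t + t*z.re)^2 + (t*z.im)^2) := by
  rw [Complex.inv_re, Complex.normSq_apply]; simp; ring_nf

lemma chiAux_inv_im (t : ℝ) (z : ℂ) :
    (((1 : ℂ) - (t : ℂ) + (t : ℂ) * z)⁻¹).im
      = -(t*z.im / ((1 - t + t*z.re)^2 + (t*z.im)^2)) := by
  rw [Complex.inv_im, Complex.normSq_apply]; simp; ring_nf

end ChiAux

/-- The complete Bernstein function `χ` associated with a CM probability
measure maps the closed right half-plane into a sector around the positive
real axis. -/
theorem chi_sectorial (ν : Measure ℝ) [IsFiniteMeasure ν]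
    (hsupp : ν (Icc (0 : ℝ) 1)ᶜ = 0) (hone : ν {1} = 0)
    (hint : IntegrableOn (fun t : ℝ => (1 - t)⁻¹) (Icc 0 1) ν)
    (hprob : ∫ t in Icc (0 : ℝ) 1, (1 - t)⁻¹ ∂ν = 1)
    (L : ℝ) (hL : 0 < L)
    (hcond : ∀ x ∈ Ico (0 : ℝ) 1,
      ∫ t in Icc (0 : ℝ) x, t / (1 - t) ^ 2 ∂ν ≤
        (L / (1 - x)) * ∫ t in Icc x 1, t / (1 - t) ∂ν)
    (χ : ℂ → ℂ)
    (hχ : ∀ z : ℂ, χ z =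
      ((∫ t in Icc (0 : ℝ) 1, (1 - t)⁻¹ ∂ν : ℝ) : ℂ) -
        ∫ t in Icc (0 : ℝ) 1, ((1 : ℂ) - (t : ℂ) + (t : ℂ) * z)⁻¹ ∂ν) :
    ∃ C : ℝ, 0 < C ∧ ∀ z : ℂ, 0 ≤ z.re → |(χ z).im| ≤ C * (χ z).re := by
  classical
  -- a.e. t ≠ 1 on any restriction
  have haeNe : ∀ s : Set ℝ, ∀ᵐ t ∂(ν.restrict s), t ≠ 1 := by
    intro s
    have h2' : (ν.restrict s) {1} = 0 :=
      le_antisymm (le_trans (Measure.restrict_apply_le _ _) hone.le) zero_le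
    rw [ae_iff]
    convert h2' using 2
    ext t; simp
  have haeIco : ∀ᵐ t ∂(ν.restrict (Icc (0:ℝ) 1)), t ∈ Ico (0:ℝ) 1 := by
    filter_upwards [ae_restrict_mem (measurableSet_Icc (a := (0:ℝ)) (b := 1)),
      haeNe (Icc 0 1)] with t ht hne
    exact ⟨ht.1, lt_of_le_of_ne ht.2 hne⟩
  -- integrability of the complex integrand
  have hwint : ∀ z : ℂ, 0 ≤ z.re →
      IntegrableOn (fun t : ℝ => ((1 : ℂ) - (t : ℂ) + (t : ℂ) * z)⁻¹) (Icc 0 1) ν := by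
    intro z hz
    refine Integrable.mono' hint ?_ ?_
    · have hm : Measurable fun t : ℝ => ((1 : ℂ) - (t : ℂ) + (t : ℂ) * z) :=
        (measurable_const.sub Complex.measurable_ofReal).add
          (Complex.measurable_ofReal.mul_const z)
      exact hm.inv.aestronglyMeasurable
    · filter_upwards [haeIco] with t ht
      have h1 : (0:ℝ) < 1 - t := by linarith [ht.2]
      have hre : 1 - t ≤ ((1 : ℂ) - (t : ℂ) + (t : ℂ) * z).re := by
        simp only [Complex.add_re, Complex.sub_re, Complex.one_re, Complex.ofReal_re,
          Complex.mul_re, Complex.ofReal_im]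
        nlinarith [mul_nonneg ht.1 hz]
      have habs : 1 - t ≤ ‖(1 : ℂ) - (t : ℂ) + (t : ℂ) * z‖ :=
        le_trans hre (le_trans (le_abs_self _) (Complex.abs_re_le_norm _))
      rw [norm_inv]
      exact inv_anti₀ h1 habs
  -- real-part integrand integrability
  have hwre : ∀ z : ℂ, 0 ≤ z.re →
      IntegrableOn (fun t : ℝ =>
        (1 - t + t*z.re) / ((1 - t + t*z.re)^2 + (t*z.im)^2)) (Icc 0 1) ν := by
    intro z hz
    have h := (hwint z hz).re
    simp only [RCLike.re_to_complex] at h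
    have : (fun t : ℝ => (1 - t + t*z.re) / ((1 - t + t*z.re)^2 + (t*z.im)^2))
        = fun t : ℝ => (((1 : ℂ) - (t : ℂ) + (t : ℂ) * z)⁻¹).re := by
      funext t; rw [chiAux_inv_re]
    rw [this]
    exact h
  have hfIint : ∀ z : ℂ, 0 ≤ z.re →
      IntegrableOn (fun t : ℝ =>
        t*z.im / ((1 - t + t*z.re)^2 + (t*z.im)^2)) (Icc 0 1) ν := by
    intro z hz
    have h := ((hwint z hz).im).neg
    simp only [RCLike.im_to_complex] at h
    have : (fun t : ℝ => t*z.im / ((1 - t + t*z.re)^2 + (t*z.im)^2))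
        = fun t : ℝ => -((((1 : ℂ) - (t : ℂ) + (t : ℂ) * z)⁻¹).im) := by
      funext t; rw [chiAux_inv_im, neg_neg]
    rw [this]
    exact h
  have hfRint : ∀ z : ℂ, 0 ≤ z.re →
      IntegrableOn (fun t : ℝ =>
        (1-t)⁻¹ - (1 - t + t*z.re) / ((1 - t + t*z.re)^2 + (t*z.im)^2)) (Icc 0 1) ν := by
    intro z hz
    exact hint.sub (hwre z hz)
  -- formulas for imaginary and real parts
  have hIm : ∀ z : ℂ, 0 ≤ z.re → (χ z).im
      = ∫ t in Icc (0:ℝ) 1, t*z.im / ((1 - t + t*z.re)^2 + (t*z.im)^2) ∂ν := by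
    intro z hz
    rw [hχ z, Complex.sub_im, Complex.ofReal_im, zero_sub]
    have him := integral_im (hwint z hz)
    simp only [RCLike.im_to_complex] at him
    rw [← him, ← integral_neg]
    refine integral_congr_ae (Filter.Eventually.of_forall fun t => ?_)
    simp only [chiAux_inv_im, neg_neg]
  have hRe : ∀ z : ℂ, 0 ≤ z.re → (χ z).re
      = ∫ t in Icc (0:ℝ) 1,
          ((1-t)⁻¹ - (1 - t + t*z.re) / ((1 - t + t*z.re)^2 + (t*z.im)^2)) ∂ν := by
    intro z hz
    rw [hχ z, Complex.sub_re, Complex.ofReal_re]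
    have hre := integral_re (hwint z hz)
    simp only [RCLike.re_to_complex] at hre
    have h : IntegrableOn (fun t : ℝ => (((1:ℂ) - (t:ℂ) + (t:ℂ)*z)⁻¹).re) (Icc 0 1) ν := by
      have h := (hwint z hz).re
      simp only [RCLike.re_to_complex] at h
      exact h
    rw [← hre, ← integral_sub hint h]
    refine integral_congr_ae (Filter.Eventually.of_forall fun t => ?_)
    simp only [chiAux_inv_re]
  -- nonnegativity of real part
  have hRe0 : ∀ z : ℂ, 0 ≤ z.re → 0 ≤ (χ z).re := by
    intro z hz
    rw [hRe z hz]
    refine setIntegral_nonneg_of_ae_restrict ?_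
    filter_upwards [haeIco] with t ht
    exact chiAux_fRe_nonneg ht.1 ht.2 hz
  -- a.e. nonnegativity of the real-part integrand
  have hfRae : ∀ z : ℂ, 0 ≤ z.re → 0 ≤ᵐ[ν.restrict (Icc (0:ℝ) 1)]
      (fun t : ℝ => (1-t)⁻¹ - (1 - t + t*z.re) / ((1 - t + t*z.re)^2 + (t*z.im)^2)) := by
    intro z hz
    filter_upwards [haeIco] with t ht
    exact chiAux_fRe_nonneg ht.1 ht.2 hz
  have hti : IntegrableOn (fun t : ℝ => t^2) (Icc 0 1) ν :=
    (continuous_pow 2).continuousOn.integrableOn_compact isCompact_Icc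
  by_cases hT0 : (∫ t in Icc (0:ℝ) 1, t^2 ∂ν) = 0
  · -- degenerate case : ν-a.e. t = 0 on [0,1], χ vanishes
    refine ⟨1, one_pos, fun z hz => ?_⟩
    have haez : ∀ᵐ t ∂(ν.restrict (Icc (0:ℝ) 1)), t = 0 := by
      have h0 := (integral_eq_zero_iff_of_nonneg_ae
        (Filter.Eventually.of_forall fun t => sq_nonneg t) hti).1 hT0
      filter_upwards [h0] with t ht
      exact (pow_eq_zero_iff (two_ne_zero)).1 ht
    have him0 : (χ z).im = 0 := by
      rw [hIm z hz]
      have : ∫ t in Icc (0:ℝ) 1, t*z.im / ((1 - t + t*z.re)^2 + (t*z.im)^2) ∂ν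
          = ∫ _t in Icc (0:ℝ) 1, (0:ℝ) ∂ν :=
        integral_congr_ae (haez.mono fun t ht => by rw [ht]; simp)
      rw [this, integral_zero]
    have hre0 : (χ z).re = 0 := by
      rw [hRe z hz]
      have : ∫ t in Icc (0:ℝ) 1,
          ((1-t)⁻¹ - (1 - t + t*z.re) / ((1 - t + t*z.re)^2 + (t*z.im)^2)) ∂ν
          = ∫ _t in Icc (0:ℝ) 1, (0:ℝ) ∂ν :=
        integral_congr_ae (haez.mono fun t ht => by rw [ht]; norm_num)
      rw [this, integral_zero]
    rw [him0, hre0]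
    norm_num
  · -- main case
    have hTpos : 0 < ∫ t in Icc (0:ℝ) 1, t^2 ∂ν :=
      lt_of_le_of_ne (integral_nonneg fun t => sq_nonneg t) (Ne.symm hT0)
    set T := ∫ t in Icc (0:ℝ) 1, t^2 ∂ν with hTdef
    have hCpos : (0:ℝ) < max (4*L+1) (8/T) :=
      lt_of_lt_of_le (by linarith) (le_max_left _ _)
    refine ⟨max (4*L+1) (8/T), hCpos, fun z hz => ?_⟩
    by_cases hb : |z.im| ≤ 1/2
    · by_cases hb0 : z.im = 0
      · -- purely real z : imaginary part vanishes
        have him0 : (χ z).im = 0 := by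
          rw [hIm z hz]
          simp [hb0]
        rw [him0, abs_zero]
        exact mul_nonneg hCpos.le (hRe0 z hz)
      · -- |Im z| ≤ 1/2, Im z ≠ 0 : the Abel-type argument
        have hbpos : 0 < |z.im| := abs_pos.2 hb0
        set x : ℝ := (1+|z.im|)⁻¹ with hxdef
        have hx0 : 0 < x := by rw [hxdef]; positivity
        have hx1 : x < 1 := by
          rw [hxdef]; exact inv_lt_one_of_one_lt₀ (by linarith)
        have hxmul : x * (1+|z.im|) = 1 := by
          rw [hxdef]; field_simp
        have h1x : 1 - x = x * |z.im| := by nlinarith [hxmul]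
        have hxI : x ∈ Ico (0:ℝ) 1 := ⟨hx0.le, hx1⟩
        have hsub1 : Icc (0:ℝ) x ⊆ Icc 0 1 := Icc_subset_Icc le_rfl hx1.le
        have hsub2 : Icc x 1 ⊆ Icc (0:ℝ) 1 := Icc_subset_Icc hx0.le le_rfl
        have hsub3 : Ioc x 1 ⊆ Icc (0:ℝ) 1 := fun t ht => ⟨le_trans hx0.le ht.1.le, ht.2⟩
        -- the tail integral of t/(1-t) is nonnegative
        have htail_nonneg : 0 ≤ ∫ t in Icc x 1, t/(1-t) ∂ν := by
          refine setIntegral_nonneg measurableSet_Icc fun t ht => ?_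
          exact div_nonneg (le_trans hx0.le ht.1) (by linarith [ht.2])
        -- integrability facts
        have hg2 : IntegrableOn (fun t : ℝ => t/(1-t)^2) (Icc 0 x) ν := by
          apply ContinuousOn.integrableOn_compact isCompact_Icc
          refine ContinuousOn.div continuousOn_id
            (((continuous_const.sub continuous_id).pow 2).continuousOn) fun t ht => ?_
          have htx : t < 1 := lt_of_le_of_lt ht.2 hx1
          exact pow_ne_zero 2 (ne_of_gt (by linarith : (0:ℝ) < 1 - t))
        have hg1 : IntegrableOn (fun t : ℝ => t/(1-t)) (Icc x 1) ν := by
          refine Integrable.mono' (hint.mono_set hsub2) ?_ ?_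
          · exact (measurable_id.div (measurable_const.sub measurable_id)).aestronglyMeasurable
          · filter_upwards [ae_restrict_mem measurableSet_Icc, haeNe (Icc x 1)] with t ht hne
            have ht1 : t < 1 := lt_of_le_of_ne ht.2 hne
            have ht0 : (0:ℝ) ≤ t := le_trans hx0.le ht.1
            have h1t : (0:ℝ) < 1 - t := by linarith
            rw [Real.norm_eq_abs, abs_of_nonneg (div_nonneg ht0 h1t.le), div_eq_mul_inv]
            exact mul_le_of_le_one_left (inv_nonneg.2 h1t.le) ht1.le
        -- Step A : small-t part
        have hA1 : ∫ t in Icc (0:ℝ) x, |t*z.im / ((1 - t + t*z.re)^2 + (t*z.im)^2)| ∂ν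
            ≤ ∫ t in Icc (0:ℝ) x, |z.im| * (t/(1-t)^2) ∂ν := by
          refine integral_mono_ae (((hfIint z hz).mono_set hsub1).abs)
            (hg2.const_mul |z.im|) ?_
          filter_upwards [ae_restrict_mem measurableSet_Icc] with t ht
          exact chiAux_L6 ht.1 (lt_of_le_of_lt ht.2 hx1) hz
        have hA2 : ∫ t in Icc (0:ℝ) x, |z.im| * (t/(1-t)^2) ∂ν
            = |z.im| * ∫ t in Icc (0:ℝ) x, t/(1-t)^2 ∂ν := integral_const_mul _ _
        have hfac : |z.im| * (L/(1-x)) = L * (1+|z.im|) := by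
          rw [h1x, mul_div_assoc', mul_comm x, mul_div_mul_left _ _ hbpos.ne',
            div_eq_iff hx0.ne']
          linear_combination (-L) * hxmul
        have hA : ∫ t in Icc (0:ℝ) x, |t*z.im / ((1 - t + t*z.re)^2 + (t*z.im)^2)| ∂ν
            ≤ 2*L * ∫ t in Icc x 1, t/(1-t) ∂ν := by
          calc ∫ t in Icc (0:ℝ) x, |t*z.im / ((1 - t + t*z.re)^2 + (t*z.im)^2)| ∂ν
              ≤ ∫ t in Icc (0:ℝ) x, |z.im| * (t/(1-t)^2) ∂ν := hA1
            _ = |z.im| * ∫ t in Icc (0:ℝ) x, t/(1-t)^2 ∂ν := hA2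
            _ ≤ |z.im| * ((L/(1-x)) * ∫ t in Icc x 1, t/(1-t) ∂ν) :=
                mul_le_mul_of_nonneg_left (hcond x hxI) (abs_nonneg _)
            _ = (L*(1+|z.im|)) * ∫ t in Icc x 1, t/(1-t) ∂ν := by
                rw [← mul_assoc, hfac]
            _ ≤ 2*L * ∫ t in Icc x 1, t/(1-t) ∂ν := by
                apply mul_le_mul_of_nonneg_right _ htail_nonneg
                nlinarith
        -- tail comparison : ∫_{[x,1]} t/(1-t) ≤ 2 ∫_{[0,1]} fRe
        have hA6 : ∫ t in Icc x 1, t/(1-t) ∂ν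
            ≤ 2 * ∫ t in Icc (0:ℝ) 1,
                ((1-t)⁻¹ - (1 - t + t*z.re) / ((1 - t + t*z.re)^2 + (t*z.im)^2)) ∂ν := by
          have step : ∫ t in Icc x 1, t/(1-t) ∂ν
              ≤ ∫ t in Icc x 1,
                  2*((1-t)⁻¹ - (1 - t + t*z.re) / ((1 - t + t*z.re)^2 + (t*z.im)^2)) ∂ν := by
            refine integral_mono_ae hg1 (((hfRint z hz).mono_set hsub2).const_mul 2) ?_
            filter_upwards [ae_restrict_mem measurableSet_Icc, haeNe (Icc x 1)] with t ht hne
            have ht1 : t < 1 := lt_of_le_of_ne ht.2 hne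
            have ht0 : (0:ℝ) ≤ t := le_trans hx0.le ht.1
            have htb : 1 - t ≤ t * |z.im| := by
              have h1 : x * |z.im| ≤ t * |z.im| :=
                mul_le_mul_of_nonneg_right ht.1 (abs_nonneg _)
              linarith [h1x ▸ h1, ht.1]
            exact chiAux_L7 ht0 ht1 hz htb
          have step2 : ∫ t in Icc x 1,
              2*((1-t)⁻¹ - (1 - t + t*z.re) / ((1 - t + t*z.re)^2 + (t*z.im)^2)) ∂ν
              = 2 * ∫ t in Icc x 1,
                  ((1-t)⁻¹ - (1 - t + t*z.re) / ((1 - t + t*z.re)^2 + (t*z.im)^2)) ∂ν :=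
            integral_const_mul _ _
          have step3 : ∫ t in Icc x 1,
              ((1-t)⁻¹ - (1 - t + t*z.re) / ((1 - t + t*z.re)^2 + (t*z.im)^2)) ∂ν
              ≤ ∫ t in Icc (0:ℝ) 1,
                  ((1-t)⁻¹ - (1 - t + t*z.re) / ((1 - t + t*z.re)^2 + (t*z.im)^2)) ∂ν :=
            setIntegral_mono_set (hfRint z hz) (hfRae z hz) (HasSubset.Subset.eventuallyLE hsub2)
          linarith
        -- Step B : tail part of the imaginary integral
        have hB : ∫ t in Ioc x 1, |t*z.im / ((1 - t + t*z.re)^2 + (t*z.im)^2)| ∂ν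
            ≤ ∫ t in Icc (0:ℝ) 1,
                ((1-t)⁻¹ - (1 - t + t*z.re) / ((1 - t + t*z.re)^2 + (t*z.im)^2)) ∂ν := by
          have b1 : ∫ t in Ioc x 1, |t*z.im / ((1 - t + t*z.re)^2 + (t*z.im)^2)| ∂ν
              ≤ ∫ t in Ioc x 1,
                  ((1-t)⁻¹ - (1 - t + t*z.re) / ((1 - t + t*z.re)^2 + (t*z.im)^2)) ∂ν := by
            refine integral_mono_ae (((hfIint z hz).mono_set hsub3).abs)
              ((hfRint z hz).mono_set hsub3) ?_
            filter_upwards [ae_restrict_mem measurableSet_Ioc, haeNe (Ioc x 1)] with t ht hne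
            have ht0 : (0:ℝ) ≤ t := le_trans hx0.le ht.1.le
            have ht1 : t < 1 := lt_of_le_of_ne ht.2 hne
            have htb : 1 - t ≤ t * |z.im| := by
              have h1 : x * |z.im| ≤ t * |z.im| :=
                mul_le_mul_of_nonneg_right ht.1.le (abs_nonneg _)
              linarith [h1x ▸ h1, ht.1.le]
            exact chiAux_L8 ht0 ht1 hz htb
          have b2 : ∫ t in Ioc x 1,
              ((1-t)⁻¹ - (1 - t + t*z.re) / ((1 - t + t*z.re)^2 + (t*z.im)^2)) ∂ν
              ≤ ∫ t in Icc (0:ℝ) 1,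
                  ((1-t)⁻¹ - (1 - t + t*z.re) / ((1 - t + t*z.re)^2 + (t*z.im)^2)) ∂ν :=
            setIntegral_mono_set (hfRint z hz) (hfRae z hz) (HasSubset.Subset.eventuallyLE hsub3)
          linarith
        -- splitting the imaginary integral
        have hunion : Icc (0:ℝ) x ∪ Ioc x 1 = Icc 0 1 := Icc_union_Ioc_eq_Icc hx0.le hx1.le
        have hdisj : Disjoint (Icc (0:ℝ) x) (Ioc x 1) := by
          rw [Set.disjoint_left]
          rintro t ⟨_, h2⟩ ⟨h3, _⟩
          exact absurd h2 (not_le.2 h3)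
        have hsplit : ∫ t in Icc (0:ℝ) 1, |t*z.im / ((1 - t + t*z.re)^2 + (t*z.im)^2)| ∂ν
            = (∫ t in Icc (0:ℝ) x, |t*z.im / ((1 - t + t*z.re)^2 + (t*z.im)^2)| ∂ν)
              + ∫ t in Ioc x 1, |t*z.im / ((1 - t + t*z.re)^2 + (t*z.im)^2)| ∂ν := by
          rw [← hunion, setIntegral_union hdisj measurableSet_Ioc
            (((hfIint z hz).mono_set hsub1).abs) (((hfIint z hz).mono_set hsub3).abs)]
        -- conclusion
        have habs : |(χ z).im|
            ≤ ∫ t in Icc (0:ℝ) 1, |t*z.im / ((1 - t + t*z.re)^2 + (t*z.im)^2)| ∂ν := by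
          rw [hIm z hz]
          exact
            norm_integral_le_integral_norm (μ := ν.restrict (Icc (0:ℝ) 1))
              (fun t : ℝ => t*z.im / ((1 - t + t*z.re)^2 + (t*z.im)^2))
        have hfinal : |(χ z).im| ≤ (4*L+1) * (χ z).re := by
          rw [hRe z hz]
          have := hA.trans (by linarith [mul_le_mul_of_nonneg_left hA6 (by linarith : (0:ℝ) ≤ 2*L)] :
            2*L * ∫ t in Icc x 1, t/(1-t) ∂ν
              ≤ 4*L * ∫ t in Icc (0:ℝ) 1,
                  ((1-t)⁻¹ - (1 - t + t*z.re) / ((1 - t + t*z.re)^2 + (t*z.im)^2)) ∂ν)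
          linarith [habs, hsplit, hB]
        calc |(χ z).im| ≤ (4*L+1) * (χ z).re := hfinal
          _ ≤ max (4*L+1) (8/T) * (χ z).re :=
            mul_le_mul_of_nonneg_right (le_max_left _ _) (hRe0 z hz)
    · -- |Im z| > 1/2 : |z| ≥ 1/2
      have hz2 : 1/4 ≤ z.re^2 + z.im^2 := by
        nlinarith [sq_abs z.im, abs_nonneg z.im, not_le.1 hb]
      have himle : |(χ z).im| ≤ 1/2 := by
        rw [hIm z hz]
        have h0 : |∫ t in Icc (0:ℝ) 1, t*z.im / ((1 - t + t*z.re)^2 + (t*z.im)^2) ∂ν|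
            ≤ ∫ t in Icc (0:ℝ) 1, |t*z.im / ((1 - t + t*z.re)^2 + (t*z.im)^2)| ∂ν := by
          exact
            norm_integral_le_integral_norm (μ := ν.restrict (Icc (0:ℝ) 1))
              (fun t : ℝ => t*z.im / ((1 - t + t*z.re)^2 + (t*z.im)^2))
        have h1 : ∫ t in Icc (0:ℝ) 1, |t*z.im / ((1 - t + t*z.re)^2 + (t*z.im)^2)| ∂ν
            ≤ ∫ t in Icc (0:ℝ) 1, (1/2)*(1-t)⁻¹ ∂ν := by
          refine integral_mono_ae ((hfIint z hz).abs) (hint.const_mul (1/2)) ?_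
          filter_upwards [haeIco] with t ht
          exact chiAux_L2 ht.1 ht.2 hz
        have h2 : ∫ t in Icc (0:ℝ) 1, (1/2)*(1-t)⁻¹ ∂ν = 1/2 := by
          rw [integral_const_mul, hprob]
          norm_num
        linarith
      have hrege : T/16 ≤ (χ z).re := by
        rw [hRe z hz]
        have h1 : ∫ t in Icc (0:ℝ) 1, t^2/16 ∂ν
            ≤ ∫ t in Icc (0:ℝ) 1,
                ((1-t)⁻¹ - (1 - t + t*z.re) / ((1 - t + t*z.re)^2 + (t*z.im)^2)) ∂ν := by
          refine integral_mono_ae (hti.div_const 16) (hfRint z hz) ?_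
          filter_upwards [haeIco] with t ht
          exact chiAux_L4 ht.1 ht.2 hz hz2
        have h2 : ∫ t in Icc (0:ℝ) 1, t^2/16 ∂ν = T/16 := by
          rw [integral_div, hTdef]
        linarith
      calc |(χ z).im| ≤ 1/2 := himle
        _ = (8/T)*(T/16) := by field_simp; norm_num
        _ ≤ (8/T)*(χ z).re := mul_le_mul_of_nonneg_left hrege (by positivity)
        _ ≤ max (4*L+1) (8/T) * (χ z).re :=
          mul_le_mul_of_nonneg_right (le_max_right _ _) (hRe0 z hz)
end
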